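/- Let G be a finite group, V a finite abelian group on which G acts on the right by automorphisms (action written A∘g), and f : G → V a 1-cocycle, i.e. f(xg) = f(x)∘g + f(g) for all x,g ∈ G. Let U ≤ G be a subgroup such that f restricted to U is bijective, and let H = {g ∈ G : f(g) = 0}. Then H ∩ U = {1} and G = H·U. -/

import Mathlib

/-- Let `G` be a finite group, `V` a finite abelian group with a right `G`-action by
automorphisms `ρ` (so `ρ (g*h) = ρ g ≫ ρ h`), `f : G → V` a 1-cocycle
(`f (x*g) = (f x) ∘ g + f g`), and `U ≤ G` with `f|_U` bijective. If
`H = {g : f g = 0}`, then `H ∩ U = {1}` and `G = H·U`. -/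
theorem stmt_14 {G V : Type*} [Group G] [Finite G] [AddCommGroup V] [Finite V]
    (ρ : G → V ≃+ V) (hρ : ∀ g h : G, ρ (g * h) = (ρ g).trans (ρ h))
    (f : G → V) (hf : ∀ x g : G, f (x * g) = ρ g (f x) + f g)
    (U : Subgroup G) (hU : Function.Bijective fun u : U => f u) :
    {g : G | f g = 0} ∩ (U : Set G) = {1} ∧
    ∀ g : G, ∃ h ∈ {g : G | f g = 0}, ∃ u ∈ U, g = h * u := by
  have hρ1 : ∀ x : V, ρ 1 x = x := by
    intro x
    have h1 : ρ 1 x = ρ 1 (ρ 1 x) := by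
      conv_lhs => rw [show (1 : G) = 1 * 1 by rw [one_mul], hρ 1 1]
      rfl
    exact (ρ 1).injective h1.symm
  have hf1 : f 1 = 0 := by
    have h := hf 1 1
    rw [one_mul, hρ1] at h
    exact right_eq_add.mp h
  constructor
  · ext g
    simp only [Set.mem_inter_iff, Set.mem_setOf_eq, SetLike.mem_coe, Set.mem_singleton_iff]
    constructor
    · rintro ⟨hg0, hgU⟩
      have : (⟨g, hgU⟩ : U) = ⟨1, U.one_mem⟩ := hU.injective (by simp [hg0, hf1])
      exact congrArg Subtype.val this
    · rintro rfl
      exact ⟨hf1, U.one_mem⟩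
  · intro g
    obtain ⟨u, hu⟩ := hU.surjective (f g)
    refine ⟨g * (u : G)⁻¹, ?_, u, u.2, by group⟩
    have h := hf (g * (u : G)⁻¹) u
    have hu' : f (u : G) = f g := hu
    rw [inv_mul_cancel_right, hu'] at h
    have h0 : ρ u (f (g * (u : G)⁻¹)) = 0 := by
      have := right_eq_add.mp h
      exact this
    exact (ρ (u : G)).injective (by rw [map_zero]; exact h0)
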